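/- Let A be a commutative multiplicative hyperring with identity and let Q be a (u,v)-absorbing 𝒞-hyperideal of A for u,v ∈ ℕ with u > v. Then rad(Q) = {x ∈ A : xᵛ ⊆ Q}. -/

import Mathlib

/-- A commutative multiplicative hyperring with identity: `(A,+)` is a commutative group,
`∘ = hmul` is a commutative associative hyperoperation with nonempty values, satisfying
`x∘(y+z) ⊆ x∘y + x∘z`, `x∘(−y) = (−x)∘y = −(x∘y)`, and `a ∈ a∘1` for all `a`. -/
class CommHyperring (A : Type*) [AddCommGroup A] [One A] where
  hmul : A → A → Set A
  hmul_nonempty : ∀ x y : A, (hmul x y).Nonempty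
  hmul_comm : ∀ x y : A, hmul x y = hmul y x
  hmul_assoc : ∀ x y z : A, (⋃ a ∈ hmul y z, hmul x a) = ⋃ b ∈ hmul x y, hmul b z
  hmul_add : ∀ x y z : A, hmul x (y + z) ⊆ Set.image2 (· + ·) (hmul x y) (hmul x z)
  hmul_neg : ∀ x y : A, hmul x (-y) = Neg.neg '' hmul x y
  neg_hmul : ∀ x y : A, hmul (-x) y = Neg.neg '' hmul x y
  one_mem : ∀ a : A, a ∈ hmul a 1

open CommHyperring

variable {A : Type*} [AddCommGroup A] [One A] [CommHyperring A]

/-- The hyperoperation extended to subsets: `X∘Y = ⋃_{x∈X, y∈Y} x∘y`. -/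
def sMul (X Y : Set A) : Set A := ⋃ x ∈ X, ⋃ y ∈ Y, hmul x y

/-- The product `x₁∘⋯∘xₙ` of the members of a list. -/
def hProd : List A → Set A
  | [] => {1}
  | [a] => {a}
  | a :: l => ⋃ c ∈ hProd l, hmul a c

/-- `xⁿ = x∘⋯∘x` (`n` factors). -/
def hPow (a : A) (n : ℕ) : Set A := hProd (List.replicate n a)

/-- `a` is a unit if `1 ∈ a∘b` for some `b`. -/
def IsUnitH (a : A) : Prop := ∃ b : A, (1 : A) ∈ hmul a b

/-- A hyperideal of `A`. -/
def IsHyperideal (B : Set A) : Prop :=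
  B.Nonempty ∧ (∀ x ∈ B, ∀ y ∈ B, x - y ∈ B) ∧ ∀ r : A, ∀ x ∈ B, hmul r x ⊆ B

def IsProperHyperideal (B : Set A) : Prop := IsHyperideal B ∧ B ≠ Set.univ

/-- A prime hyperideal. -/
def IsPrimeHyperideal (B : Set A) : Prop :=
  IsProperHyperideal B ∧ ∀ x y : A, hmul x y ⊆ B → x ∈ B ∨ y ∈ B

/-- The prime radical: the intersection of all prime hyperideals containing `B`
(`= A` if there are none). -/
def radH (B : Set A) : Set A := ⋂₀ {P : Set A | IsPrimeHyperideal P ∧ B ⊆ P}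

/-- A `𝒞`-hyperideal: meets a finite product `⇒` contains it. -/
def IsCHyperideal (B : Set A) : Prop :=
  IsHyperideal B ∧ ∀ l : List A, l ≠ [] → (hProd l ∩ B).Nonempty → hProd l ⊆ B

def setAdd (X Y : Set A) : Set A := Set.image2 (· + ·) X Y

/-- The sum `C₁ + ⋯ + Cₙ` of the finite products coded by a list of lists. -/
def sumProds (L : List (List A)) : Set A := L.foldr (fun l S => setAdd (hProd l) S) {0}

/-- A strong `𝒞`-hyperideal: meets a finite sum of finite products `⇒` contains it. -/
def IsStrongCHyperideal (B : Set A) : Prop :=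
  IsHyperideal B ∧ ∀ L : List (List A), L ≠ [] → (∀ l ∈ L, l ≠ []) →
    (sumProds L ∩ B).Nonempty → sumProds L ⊆ B

/-- A `v`-absorbing hyperideal. -/
def IsNAbsorbing (Q : Set A) (v : ℕ) : Prop :=
  IsProperHyperideal Q ∧ ∀ l : List A, l.length = v + 1 → hProd l ⊆ Q →
    ∃ l', l'.Sublist l ∧ l'.length = v ∧ hProd l' ⊆ Q

/-- A `(u,v)`-absorbing hyperideal. -/
def IsUVAbsorbing (Q : Set A) (u v : ℕ) : Prop :=
  IsProperHyperideal Q ∧ ∀ l : List A, l.length = u → (∀ x ∈ l, ¬IsUnitH x) → hProd l ⊆ Q →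
    ∃ l', l'.Sublist l ∧ l'.length = v ∧ hProd l' ⊆ Q

/-- An `AB`-`(u,v)`-absorbing hyperideal. -/
def IsABUVAbsorbing (Q : Set A) (u v : ℕ) : Prop :=
  IsProperHyperideal Q ∧ ∀ l : List A, l.length = u → hProd l ⊆ Q →
    ∃ l', l'.Sublist l ∧ l'.length = v ∧ hProd l' ⊆ Q

/-- A `(u,v)`-absorbing prime hyperideal. -/
def IsUVAbsorbingPrime (Q : Set A) (u v : ℕ) : Prop :=
  IsProperHyperideal Q ∧ ∀ l : List A, l.length = u → (∀ x ∈ l, ¬IsUnitH x) → hProd l ⊆ Q →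
    hProd (l.take v) ⊆ Q ∨ hProd (l.drop v) ⊆ Q

/-- A maximal hyperideal. -/
def IsMaximalHyperideal (M : Set A) : Prop :=
  IsProperHyperideal M ∧ ∀ B : Set A, IsHyperideal B → M ⊂ B → B = Set.univ

/-- `A` is local if it has exactly one maximal hyperideal. -/
def IsLocalH (A : Type*) [AddCommGroup A] [One A] [CommHyperring A] : Prop :=
  ∃! M : Set A, IsMaximalHyperideal M

/-- `P` is a prime hyperideal minimal over `Q`. -/
def MinimalPrimeOver (Q P : Set A) : Prop :=
  IsPrimeHyperideal P ∧ Q ⊆ P ∧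
    ∀ P' : Set A, IsPrimeHyperideal P' → Q ⊆ P' → P' ⊆ P → P' = P

/-- `Iⁿ = ⋃ {x₁∘⋯∘xₙ : xᵢ ∈ I}`. -/
def idealPow (I : Set A) (n : ℕ) : Set A :=
  ⋃ l ∈ {l : List A | l.length = n ∧ ∀ x ∈ l, x ∈ I}, hProd l

/-- `I₁∘⋯∘Iₙ = ⋃ {x₁∘⋯∘xₙ : xᵢ ∈ Iᵢ}`. -/
def idealProd (L : List (Set A)) : Set A :=
  ⋃ l ∈ {l : List A | List.Forall₂ (· ∈ ·) l L}, hProd l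

/-- `Abs(Q)`: the minimal `v` such that `Q` is `v`-absorbing. -/
noncomputable def AbsN (Q : Set A) : ℕ := sInf {v : ℕ | IsNAbsorbing Q v}

/-- `abs(Q)`: the minimal `v` such that `Q` is `(Abs(Q)+1, v)`-absorbing. -/
noncomputable def absN (Q : Set A) : ℕ := sInf {v : ℕ | IsUVAbsorbing Q (AbsN Q + 1) v}

/-- A primary hyperideal. -/
def IsPrimaryHyperideal (Q : Set A) : Prop :=
  IsProperHyperideal Q ∧ ∀ x y : A, hmul x y ⊆ Q → x ∈ Q ∨ ∃ t : ℕ, 1 ≤ t ∧ hPow y t ⊆ Q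

/-- `A` is a hyperfield if every nonzero element is a unit. -/
def IsHyperfield (A : Type*) [AddCommGroup A] [One A] [CommHyperring A] : Prop :=
  ∀ x : A, x ≠ 0 → IsUnitH x

/-- `(Q : x) = {a : a∘x ⊆ Q}`. -/
def colonH (Q : Set A) (x : A) : Set A := {a : A | hmul a x ⊆ Q}

/-- `J(A)`: the intersection of all maximal hyperideals of `A`. -/
def JacobsonH (A : Type*) [AddCommGroup A] [One A] [CommHyperring A] : Set A :=
  ⋂₀ {M : Set A | IsMaximalHyperideal M}

-- basic lemmas
lemma mem_sMul {X Y : Set A} {a : A} : a ∈ sMul X Y ↔ ∃ x ∈ X, ∃ y ∈ Y, a ∈ hmul x y := by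
  simp [sMul]

lemma sMul_mono {X X' Y Y' : Set A} (hX : X ⊆ X') (hY : Y ⊆ Y') : sMul X Y ⊆ sMul X' Y' := by
  intro a ha
  rcases mem_sMul.1 ha with ⟨x, hx, y, hy, h⟩
  exact mem_sMul.2 ⟨x, hX hx, y, hY hy, h⟩

lemma sMul_singleton {x y : A} : sMul {x} {y} = hmul x y := by
  simp [sMul]

lemma sMul_singleton_left {x : A} {Y : Set A} : sMul {x} Y = ⋃ y ∈ Y, hmul x y := by
  simp [sMul]

lemma sMul_comm (X Y : Set A) : sMul X Y = sMul Y X := by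
  ext a
  simp only [mem_sMul]
  constructor <;> rintro ⟨x, hx, y, hy, h⟩ <;> exact ⟨y, hy, x, hx, by rwa [hmul_comm]⟩

lemma exists_assoc {x y z q w : A} (hw : w ∈ hmul x y) (hq : q ∈ hmul w z) :
    ∃ c ∈ hmul y z, q ∈ hmul x c := by
  have : q ∈ ⋃ b ∈ hmul x y, hmul b z := Set.mem_biUnion hw hq
  rw [← hmul_assoc] at this
  simpa using this

lemma exists_assoc' {x y z q c : A} (hc : c ∈ hmul y z) (hq : q ∈ hmul x c) :
    ∃ w ∈ hmul x y, q ∈ hmul w z := by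
  have : q ∈ ⋃ c ∈ hmul y z, hmul x c := Set.mem_biUnion hc hq
  rw [hmul_assoc] at this
  simpa using this

lemma sMul_assoc (X Y Z : Set A) : sMul (sMul X Y) Z = sMul X (sMul Y Z) := by
  ext a
  simp only [mem_sMul]
  constructor
  · rintro ⟨w, ⟨x, hx, y, hy, hw⟩, z, hz, h⟩
    obtain ⟨c, hc, hq⟩ := exists_assoc hw h
    exact ⟨x, hx, c, ⟨y, hy, z, hz, hc⟩, hq⟩
  · rintro ⟨x, hx, c, ⟨y, hy, z, hz, hc⟩, h⟩
    obtain ⟨w, hw, hq⟩ := exists_assoc' hc h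
    exact ⟨w, ⟨x, hx, y, hy, hw⟩, z, hz, hq⟩

lemma sMul_nonempty {X Y : Set A} (hX : X.Nonempty) (hY : Y.Nonempty) : (sMul X Y).Nonempty := by
  obtain ⟨x, hx⟩ := hX; obtain ⟨y, hy⟩ := hY
  obtain ⟨a, ha⟩ := hmul_nonempty x y
  exact ⟨a, mem_sMul.2 ⟨x, hx, y, hy, ha⟩⟩

lemma hProd_cons {a : A} {l : List A} (hl : l ≠ []) :
    hProd (a :: l) = sMul {a} (hProd l) := by
  match l with
  | b :: l' =>
    rw [sMul_singleton_left]
    rfl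

lemma hProd_singleton {a : A} : hProd [a] = {a} := rfl

lemma hProd_nonempty (l : List A) : (hProd l).Nonempty := by
  induction l with
  | nil => exact ⟨1, rfl⟩
  | cons a l ih =>
    match l with
    | [] => exact ⟨a, rfl⟩
    | b :: l' =>
      rw [hProd_cons (by simp)]
      exact sMul_nonempty ⟨a, rfl⟩ ih

lemma hProd_append {l₁ l₂ : List A} (h₁ : l₁ ≠ []) (h₂ : l₂ ≠ []) :
    hProd (l₁ ++ l₂) = sMul (hProd l₁) (hProd l₂) := by
  induction l₁ with
  | nil => exact absurd rfl h₁
  | cons a l ih =>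
    match l with
    | [] =>
      rw [List.singleton_append, hProd_cons h₂, hProd_singleton]
    | b :: l' =>
      have hne : (b :: l') ++ l₂ ≠ [] := by simp
      rw [List.cons_append, hProd_cons hne, ih (by simp),
        hProd_cons (l := b :: l') (by simp), sMul_assoc]

-- power lemmas
lemma hPow_one {a : A} : hPow a 1 = {a} := rfl

lemma hPow_add {a : A} {m n : ℕ} (hm : 1 ≤ m) (hn : 1 ≤ n) :
    hPow a (m + n) = sMul (hPow a m) (hPow a n) := by
  rw [hPow, List.replicate_add, hProd_append, hPow, hPow]
  · exact (by simp; omega)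
  · exact (by simp; omega)

lemma hPow_nonempty {a : A} {n : ℕ} : (hPow a n).Nonempty := hProd_nonempty _

-- ideal lemmas
lemma IsHyperideal.zero_mem {B : Set A} (hB : IsHyperideal B) : (0 : A) ∈ B := by
  obtain ⟨⟨x, hx⟩, hsub, _⟩ := hB
  simpa using hsub x hx x hx

lemma IsHyperideal.add_mem {B : Set A} (hB : IsHyperideal B) {x y : A}
    (hx : x ∈ B) (hy : y ∈ B) : x + y ∈ B := by
  have h0 : (0 : A) ∈ B := hB.zero_mem
  have : 0 - y ∈ B := hB.2.1 0 h0 y hy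
  simpa [sub_sub_cancel, sub_neg_eq_add] using hB.2.1 x hx _ this

lemma IsHyperideal.neg_mem {B : Set A} (hB : IsHyperideal B) {x : A} (hx : x ∈ B) : -x ∈ B := by
  simpa using hB.2.1 0 hB.zero_mem x hx

lemma IsHyperideal.hmul_subset {B : Set A} (hB : IsHyperideal B) {x : A} (hx : x ∈ B) (r : A) :
    hmul r x ⊆ B := hB.2.2 r x hx

lemma IsHyperideal.hmul_subset' {B : Set A} (hB : IsHyperideal B) {x : A} (hx : x ∈ B) (r : A) :
    hmul x r ⊆ B := by rw [hmul_comm]; exact hB.2.2 r x hx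

lemma IsHyperideal.sMul_subset_right {B : Set A} (hB : IsHyperideal B) {X Y : Set A}
    (hY : Y ⊆ B) : sMul X Y ⊆ B := by
  intro a ha
  rcases mem_sMul.1 ha with ⟨x, _, y, hy, h⟩
  exact hB.hmul_subset (hY hy) x h

lemma IsHyperideal.sMul_subset_left {B : Set A} (hB : IsHyperideal B) {X Y : Set A}
    (hX : X ⊆ B) : sMul X Y ⊆ B := by
  rw [sMul_comm]; exact hB.sMul_subset_right hX

lemma IsHyperideal.hPow_mono {B : Set A} (hB : IsHyperideal B) {a : A} {m n : ℕ}
    (hm : 1 ≤ m) (hmn : m ≤ n) (h : hPow a m ⊆ B) : hPow a n ⊆ B := by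
  rcases Nat.eq_or_lt_of_le hmn with rfl | hlt
  · exact h
  · obtain ⟨k, rfl⟩ : ∃ k, n = k + m := ⟨n - m, by omega⟩
    rw [hPow_add (by omega) hm]
    exact hB.sMul_subset_right h

-- prime lemmas
lemma IsPrimeHyperideal.mem_of_hPow {P : Set A} (hP : IsPrimeHyperideal P) {a : A} {n : ℕ}
    (hn : 1 ≤ n) (h : hPow a n ⊆ P) : a ∈ P := by
  induction n with
  | zero => omega
  | succ n ih =>
    rcases Nat.eq_zero_or_pos n with rfl | hn'
    · simpa [hPow_one] using h
    · by_cases ha : a ∈ P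
      · exact ha
      · refine ih hn' fun c hc => ?_
        have hsub : hmul a c ⊆ P := by
          refine Set.Subset.trans ?_ h
          have : hPow a (n + 1) = sMul {a} (hPow a n) := by
            rw [hPow, List.replicate_succ, hProd_cons ((by simp; omega))]; rfl
          rw [this]
          exact fun q hq => mem_sMul.2 ⟨a, rfl, c, hc, hq⟩
        rcases hP.2 a c hsub with h' | h'
        · exact absurd h' ha
        · exact h'

lemma hPow_succ_eq {a : A} {n : ℕ} (hn : 1 ≤ n) :
    hPow a (n + 1) = sMul {a} (hPow a n) := by
  rw [hPow, List.replicate_succ, hProd_cons ((by simp; omega))]; rfl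

lemma one_mem_hPow_one {n : ℕ} (hn : 1 ≤ n) : (1 : A) ∈ hPow (1 : A) n := by
  induction n with
  | zero => omega
  | succ n ih =>
    rcases Nat.eq_zero_or_pos n with rfl | hn'
    · simp [hPow_one]
    · rw [hPow_succ_eq hn']
      exact mem_sMul.2 ⟨1, rfl, 1, ih hn', one_mem 1⟩

-- membership powers
lemma hPow_subset_of_mem_hmul {a x y : A} (ha : a ∈ hmul x y) {n : ℕ} (hn : 1 ≤ n) :
    hPow a n ⊆ sMul (hPow x n) (hPow y n) := by
  induction n with
  | zero => omega
  | succ n ih =>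
    rcases Nat.eq_zero_or_pos n with rfl | hn'
    · rw [hPow_one, hPow_one, hPow_one, sMul_singleton]
      simpa using ha
    · rw [hPow_succ_eq hn', hPow_succ_eq (a := x) hn', hPow_succ_eq (a := y) hn']
      calc sMul {a} (hPow a n) ⊆ sMul (hmul x y) (sMul (hPow x n) (hPow y n)) :=
            sMul_mono (by simpa using ha) (ih hn')
        _ = sMul (sMul {x} {y}) (sMul (hPow x n) (hPow y n)) := by rw [sMul_singleton]
        _ = sMul {x} (sMul {y} (sMul (hPow x n) (hPow y n))) := by rw [sMul_assoc]
        _ = sMul {x} (sMul (sMul {y} (hPow x n)) (hPow y n)) := by rw [sMul_assoc]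
        _ = sMul {x} (sMul (sMul (hPow x n) {y}) (hPow y n)) := by rw [sMul_comm {y}]
        _ = sMul {x} (sMul (hPow x n) (sMul {y} (hPow y n))) := by rw [sMul_assoc]
        _ = sMul (sMul {x} (hPow x n)) (sMul {y} (hPow y n)) := by rw [sMul_assoc]

-- unit lemmas
lemma IsUnitH.of_mem_hmul {c x d : A} (hc : c ∈ hmul x d) (h : IsUnitH c) : IsUnitH x := by
  obtain ⟨b, hb⟩ := h
  obtain ⟨e, he, h1⟩ := exists_assoc hc hb
  exact ⟨e, h1⟩

lemma IsUnitH.of_mem_hPow {c x : A} {n : ℕ} (hn : 1 ≤ n) (hc : c ∈ hPow x n)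
    (h : IsUnitH c) : IsUnitH x := by
  rcases Nat.eq_or_lt_of_le hn with h1 | h1
  · rw [← h1, hPow_one] at hc
    rw [Set.mem_singleton_iff] at hc
    rwa [hc] at h
  · obtain ⟨m, rfl⟩ : ∃ m, n = m + 1 := ⟨n - 1, by omega⟩
    rw [hPow_succ_eq (by omega)] at hc
    rcases mem_sMul.1 hc with ⟨x', hx', d, hd, hcd⟩
    rw [Set.mem_singleton_iff] at hx'
    subst hx'
    exact h.of_mem_hmul hcd

lemma IsProperHyperideal.one_not_mem {Q : Set A} (hQ : IsProperHyperideal Q) : (1 : A) ∉ Q := by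
  intro h1
  apply hQ.2
  ext a
  simp only [Set.mem_univ, iff_true]
  exact hQ.1.hmul_subset h1 a (one_mem a)

lemma IsProperHyperideal.not_hPow_subset_of_unit {Q : Set A} (hQ : IsProperHyperideal Q)
    {w : A} (hw : IsUnitH w) {n : ℕ} (hn : 1 ≤ n) : ¬ hPow w n ⊆ Q := by
  intro h
  obtain ⟨b, hb⟩ := hw
  have h1 : (1 : A) ∈ sMul (hPow w n) (hPow b n) :=
    hPow_subset_of_mem_hmul hb hn (one_mem_hPow_one hn)
  have : (1 : A) ∈ Q := hQ.1.sMul_subset_left h h1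
  exact hQ.one_not_mem this

-- the descent lemma
lemma descent {Q : Set A} {u v : ℕ} (hv : 1 ≤ v) (hvu : v < u)
    (hC : IsCHyperideal Q) (habs : IsUVAbsorbing Q u v) {x : A} (hx : ¬ IsUnitH x) :
    ∀ t, 1 ≤ t → hPow x t ⊆ Q → hPow x v ⊆ Q := by
  intro t
  induction t using Nat.strong_induction_on with
  | _ t ih =>
    intro ht hQt
    rcases le_or_gt t v with htv | htv
    · exact hC.1.hPow_mono ht htv hQt
    · -- t > v
      set s := max t u with hs
      have hsu : u ≤ s := le_max_right _ _
      have hst : t ≤ s := le_max_left _ _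
      have hQs : hPow x s ⊆ Q := hC.1.hPow_mono ht hst hQt
      set k := s + 1 - u with hk
      have hk1 : 1 ≤ k := by omega
      obtain ⟨c, hc⟩ := hPow_nonempty (a := x) (n := k)
      have hcnu : ¬ IsUnitH c := fun h => hx (h.of_mem_hPow hk1 hc)
      set l := List.replicate (u - 1) x ++ [c] with hl
      have hlen : l.length = u := by simp [hl]; omega
      have hlnu : ∀ y ∈ l, ¬ IsUnitH y := by
        intro y hy
        rcases List.mem_append.1 hy with h' | h'
        · rw [List.eq_of_mem_replicate h']; exact hx
        · rw [List.mem_singleton.1 h']; exact hcnu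
      have hu1 : 1 ≤ u - 1 := by omega
      have hlprod : hProd l ⊆ Q := by
        rw [hl, hProd_append (by simp; omega) (by simp), hProd_singleton]
        calc sMul (hProd (List.replicate (u-1) x)) {c}
            ⊆ sMul (hPow x (u-1)) (hPow x k) := sMul_mono (by rw [hPow]) (by simpa using hc)
          _ = hPow x (u - 1 + k) := (hPow_add hu1 hk1).symm
          _ ⊆ Q := by
              have : u - 1 + k = s := by omega
              rw [this]; exact hQs
      obtain ⟨l', hl's, hl'len, hl'Q⟩ := habs.2 l hlen hlnu hlprod
      rw [hl] at hl's
      rw [List.sublist_append_iff] at hl's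
      obtain ⟨s₁, s₂, rfl, hs₁, hs₂⟩ := hl's
      obtain ⟨m, hm, rfl⟩ := List.sublist_replicate_iff.1 hs₁
      have hs₂' : s₂ = [] ∨ s₂ = [c] := by
        cases hs₂ with
        | cons _ h => left; exact List.sublist_nil.1 h
        | cons_cons _ h => right; rw [List.sublist_nil.1 h]
      rcases hs₂' with rfl | rfl
      · -- l' = replicate m x with m = v
        rw [List.append_nil] at hl'Q hl'len
        rw [List.length_replicate] at hl'len
        subst hl'len
        exact hl'Q
      · -- l' = replicate m x ++ [c], m = v - 1
        have hm' : m = v - 1 := by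
          rw [List.length_append, List.length_replicate] at hl'len; simp at hl'len; omega
        subst hm'
        -- hProd l' ⊆ hPow x (v - 1 + k) and ⊆ Q
        have hsubpow : hProd (List.replicate (v-1) x ++ [c]) ⊆ hPow x (v - 1 + k) := by
          rcases Nat.eq_zero_or_pos (v - 1) with h0 | hpos
          · rw [h0, List.replicate_zero, List.nil_append, hProd_singleton]
            simpa [h0] using hc
          · rw [hProd_append (by simp; omega) (by simp), hProd_singleton,
              hPow_add hpos hk1]
            exact sMul_mono (by rw [hPow]) (by simpa using hc)
        have hinter : (hProd (List.replicate (v - 1 + k) x) ∩ Q).Nonempty := by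
          obtain ⟨q, hq⟩ := hProd_nonempty (List.replicate (v-1) x ++ [c])
          exact ⟨q, hsubpow hq, hl'Q hq⟩
        have hnewQ : hPow x (v - 1 + k) ⊆ Q := hC.2 _ (by simp; omega) hinter
        -- now recurse or finish
        rcases le_or_gt u t with hut | hut
        · -- s = t, new exponent t - u + v < t
          have hseq : s = t := by omega
          have : v - 1 + k = t + v - u := by omega
          rw [this] at hnewQ
          exact ih (t + v - u) (by omega) (by omega) hnewQ
        · -- s = u, new exponent = v
          have : v - 1 + k = v := by omega
          rwa [this] at hnewQ

-- closure lemmas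
lemma hmul_closure_subset {P Z : Set A} {c : A}
    (hsub : ∀ p ∈ P, ∀ q ∈ P, p - q ∈ P)
    (hZ : Z.Nonempty) (h : ∀ z ∈ Z, hmul c z ⊆ P) :
    ∀ t ∈ AddSubgroup.closure Z, hmul c t ⊆ P := by
  obtain ⟨z₀, hz₀⟩ := hZ
  obtain ⟨p₀, hp₀⟩ := hmul_nonempty c z₀
  have hp₀P : p₀ ∈ P := h z₀ hz₀ hp₀
  have h0P : (0 : A) ∈ P := by simpa using hsub p₀ hp₀P p₀ hp₀P
  have hneg : ∀ p ∈ P, -p ∈ P := fun p hp => by simpa using hsub 0 h0P p hp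
  have hadd : ∀ p ∈ P, ∀ q ∈ P, p + q ∈ P := fun p hp q hq => by
    simpa [sub_neg_eq_add] using hsub p hp (-q) (hneg q hq)
  intro t ht
  induction ht using AddSubgroup.closure_induction with
  | mem z hz => exact h z hz
  | zero =>
    intro q hq
    rw [show (0 : A) = z₀ + -z₀ by abel] at hq
    obtain ⟨p, hp, p', hp', rfl⟩ := hmul_add c z₀ (-z₀) hq
    rw [hmul_neg] at hp'
    obtain ⟨p'', hp'', rfl⟩ := hp'
    have : p - p'' ∈ P := hsub p (h z₀ hz₀ hp) p'' (h z₀ hz₀ hp'')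
    simpa [sub_eq_add_neg] using this
  | add y z hy hz ihy ihz =>
    intro q hq
    obtain ⟨p, hp, p', hp', rfl⟩ := hmul_add c y z hq
    exact hadd p (ihy hp) p' (ihz hp')
  | neg y hy ihy =>
    intro q hq
    rw [hmul_neg] at hq
    obtain ⟨p, hp, rfl⟩ := hq
    exact hneg p (ihy hp)

/-- the generating set `⋃ w, w∘a`. -/
def genSet (a : A) : Set A := ⋃ w, hmul w a

lemma mem_genSet_self (a : A) : a ∈ genSet a :=
  Set.mem_iUnion.2 ⟨1, by rw [hmul_comm]; exact one_mem a⟩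

lemma genSet_nonempty (a : A) : (genSet a).Nonempty := by
  obtain ⟨z, hz⟩ := hmul_nonempty (1:A) a
  exact ⟨z, Set.mem_iUnion.2 ⟨1, hz⟩⟩

lemma hmul_genSet_subset {a s z : A} (hz : z ∈ genSet a) : hmul s z ⊆ genSet a := by
  obtain ⟨U, ⟨r, rfl⟩, hzU⟩ := hz
  intro q hq
  obtain ⟨w, hw, hq'⟩ := exists_assoc' hzU hq
  exact Set.mem_iUnion.2 ⟨w, hq'⟩

lemma hmul_closure_genSet (a s : A) :
    ∀ t ∈ AddSubgroup.closure (genSet a), hmul s t ⊆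
      (AddSubgroup.closure (genSet a) : Set A) :=
  hmul_closure_subset (fun p hp q hq => sub_mem hp hq) (genSet_nonempty a)
    (fun z hz => (hmul_genSet_subset hz).trans AddSubgroup.subset_closure)

/-- step lemma -/
lemma hmul_closure_genSet_subset_ideal {P : Set A} (hP : IsHyperideal P) {a e : A}
    (he : hmul e a ⊆ P) :
    ∀ t ∈ AddSubgroup.closure (genSet a), hmul e t ⊆ P := by
  refine hmul_closure_subset (fun p hp q hq => hP.2.1 p hp q hq) (genSet_nonempty a) ?_
  rintro z ⟨U, ⟨r, rfl⟩, hzU⟩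
  intro q hq
  obtain ⟨w, hw, hq'⟩ := exists_assoc' hzU hq
  -- q ∈ hmul w a with w ∈ hmul e r; rewrite q ∈ hmul a w
  rw [hmul_comm] at hq'
  obtain ⟨d, hd, hq''⟩ := exists_assoc' hw hq'
  -- d ∈ hmul a e, q ∈ hmul d r
  have hdP : d ∈ P := by rw [hmul_comm] at hd; exact he hd
  have : hmul d r ⊆ P := hP.hmul_subset' hdP r
  exact this hq''

lemma exists_prime_avoiding {Q : Set A} {x : A} (hQ : IsProperHyperideal Q)
    (hC : IsCHyperideal Q) (hpow : ∀ t, 1 ≤ t → ¬ hPow x t ⊆ Q) :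
    ∃ P : Set A, IsPrimeHyperideal P ∧ Q ⊆ P ∧ x ∉ P := by
  set S : Set (Set A) :=
    {I | IsHyperideal I ∧ Q ⊆ I ∧ ∀ t, 1 ≤ t → ∀ y ∈ hPow x t, y ∉ I} with hS
  have hQS : Q ∈ S := by
    refine ⟨hQ.1, subset_rfl, fun t ht y hy hyQ => hpow t ht ?_⟩
    exact hC.2 (List.replicate t x) (by simp; omega) ⟨y, hy, hyQ⟩
  have hchain : ∀ c ⊆ S, IsChain (· ⊆ ·) c → c.Nonempty → ∃ ub ∈ S, ∀ s ∈ c, s ⊆ ub := by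
    rintro c hcS hch ⟨I₀, hI₀⟩
    refine ⟨⋃₀ c, ⟨⟨⟨0, Set.mem_sUnion.2 ⟨I₀, hI₀, (hcS hI₀).1.zero_mem⟩⟩, ?_, ?_⟩, ?_, ?_⟩,
      fun s hs => Set.subset_sUnion_of_mem hs⟩
    · rintro p ⟨I, hI, hpI⟩ q ⟨J, hJ, hqJ⟩
      rcases hch.total hI hJ with h | h
      · exact Set.mem_sUnion.2 ⟨J, hJ, (hcS hJ).1.2.1 p (h hpI) q hqJ⟩
      · exact Set.mem_sUnion.2 ⟨I, hI, (hcS hI).1.2.1 p hpI q (h hqJ)⟩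
    · rintro r p ⟨I, hI, hpI⟩
      exact ((hcS hI).1.2.2 r p hpI).trans (Set.subset_sUnion_of_mem hI)
    · exact (hcS hI₀).2.1.trans (Set.subset_sUnion_of_mem hI₀)
    · rintro t ht y hy ⟨I, hI, hyI⟩
      exact (hcS hI).2.2 t ht y hy hyI
  obtain ⟨P, hQP, hPmax⟩ := zorn_subset_nonempty S hchain Q hQS
  have hPS : P ∈ S := hPmax.1
  obtain ⟨hPideal, hQsubP, hPdis⟩ := hPS
  have hxP : x ∉ P := hPdis 1 le_rfl x (by rw [hPow_one]; rfl)
  have hPproper : IsProperHyperideal P :=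
    ⟨hPideal, fun h => hxP (h ▸ Set.mem_univ x)⟩
  refine ⟨P, ⟨hPproper, ?_⟩, hQsubP, hxP⟩
  intro a b hab
  by_contra hcon
  push_neg at hcon
  obtain ⟨haP, hbP⟩ := hcon
  -- key: for any a ∉ P, the ideal P + ⟨a⟩ meets some power of x
  have key : ∀ a : A, a ∉ P → ∃ s, 1 ≤ s ∧ ∃ α ∈ hPow x s, ∃ p ∈ P,
      ∃ t ∈ (AddSubgroup.closure (genSet a) : Set A), α = p + t := by
    intro a haP
    set D : Set A := {d | ∃ p ∈ P, ∃ t ∈ (AddSubgroup.closure (genSet a) : Set A), d = p + t}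
      with hD
    have hPD : P ⊆ D := fun p hp =>
      ⟨p, hp, 0, (AddSubgroup.closure (genSet a)).zero_mem, by abel⟩
    have haD : a ∈ D :=
      ⟨0, hPideal.zero_mem, a, AddSubgroup.subset_closure (mem_genSet_self a), by abel⟩
    have hDideal : IsHyperideal D := by
      refine ⟨⟨a, haD⟩, ?_, ?_⟩
      · rintro _ ⟨p, hp, t, ht, rfl⟩ _ ⟨p', hp', t', ht', rfl⟩
        exact ⟨p - p', hPideal.2.1 p hp p' hp', t - t', sub_mem ht ht', by abel⟩
      · rintro r _ ⟨p, hp, t, ht, rfl⟩ q hq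
        obtain ⟨q₁, hq₁, q₂, hq₂, rfl⟩ := hmul_add r p t hq
        exact ⟨q₁, hPideal.hmul_subset hp r hq₁, q₂, hmul_closure_genSet a r t ht hq₂, rfl⟩
    have hDnotS : D ∉ S := by
      intro hDS
      have hPD' : D ⊆ P := hPmax.2 hDS hPD
      exact haP (hPD' haD)
    rw [hS] at hDnotS
    simp only [Set.mem_setOf_eq, not_and, not_forall] at hDnotS
    obtain ⟨s, hs, α, hα, hαD⟩ := hDnotS hDideal (hQsubP.trans hPD)
    rw [not_not] at hαD
    obtain ⟨p, hp, t, ht, rfl⟩ := hαD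
    exact ⟨s, hs, p + t, hα, p, hp, t, ht, rfl⟩
  obtain ⟨s, hs, α, hα, p₁, hp₁, t₁, ht₁, hαeq⟩ := key a haP
  obtain ⟨s', hs', β, hβ, p₂, hp₂, t₂, ht₂, hβeq⟩ := key b hbP
  -- step (i): b∘t₁ ⊆ P
  have hba : hmul b a ⊆ P := by rw [hmul_comm]; exact hab
  have hbt₁ : hmul b t₁ ⊆ P := hmul_closure_genSet_subset_ideal hPideal hba t₁ ht₁
  -- step (ii): α∘b ⊆ P
  have hαb : hmul α b ⊆ P := by
    rw [hmul_comm, hαeq]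
    intro q hq
    obtain ⟨q₁, hq₁, q₂, hq₂, rfl⟩ := hmul_add b p₁ t₁ hq
    exact hPideal.add_mem (hPideal.hmul_subset hp₁ b hq₁) (hbt₁ hq₂)
  -- step (iii): α∘t₂ ⊆ P
  have hαt₂ : hmul α t₂ ⊆ P := hmul_closure_genSet_subset_ideal hPideal hαb t₂ ht₂
  -- step (iv): α∘β ⊆ P
  have hαβ : hmul α β ⊆ P := by
    rw [hβeq]
    intro q hq
    obtain ⟨q₁, hq₁, q₂, hq₂, rfl⟩ := hmul_add α p₂ t₂ hq
    exact hPideal.add_mem (hPideal.hmul_subset hp₂ α hq₁) (hαt₂ hq₂)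
  -- step (v): α∘β ⊆ hPow x (s+s')
  have hαβpow : hmul α β ⊆ hPow x (s + s') := by
    rw [hPow_add hs hs']
    exact fun q hq => mem_sMul.2 ⟨α, hα, β, hβ, hq⟩
  obtain ⟨q, hq⟩ := hmul_nonempty α β
  exact hPdis (s + s') (by omega) q (hαβpow hq) (hαβ hq)

/-- if `Q` is a `(u,v)`-absorbing `𝒞`-hyperideal then
`rad(Q) = {x : xᵛ ⊆ Q}`. -/
theorem radH_eq_of_uv_absorbing (Q : Set A) (u v : ℕ) (hv : 1 ≤ v) (hvu : v < u)
    (hC : IsCHyperideal Q) (habs : IsUVAbsorbing Q u v) :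
    radH Q = {x : A | hPow x v ⊆ Q} := by
  ext x
  simp only [radH, Set.mem_sInter, Set.mem_setOf_eq]
  constructor
  · intro hx
    have hexists : ∃ t, 1 ≤ t ∧ hPow x t ⊆ Q := by
      by_contra hcon
      push_neg at hcon
      obtain ⟨P, hP, hQP, hxP⟩ := exists_prime_avoiding habs.1 hC hcon
      exact hxP (hx P ⟨hP, hQP⟩)
    obtain ⟨t, ht, hQt⟩ := hexists
    by_cases hxu : IsUnitH x
    · exact absurd hQt (habs.1.not_hPow_subset_of_unit hxu ht)
    · exact descent hv hvu hC habs hxu t ht hQt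
  · rintro hxv P ⟨hP, hQP⟩
    exact hP.mem_of_hPow hv (hxv.trans hQP)
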